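/- arXiv:2103.04767 — 3 statements merged into one kernel-verified Lean document; each statement's English description precedes it below -/
import Mathlib

section
/- Let f ∈ ℤ[z] be an irreducible polynomial of degree r ≥ 2 whose complex roots all lie on the closed unit disk, and such that the leading coefficient f_r satisfies |f_r| = 1. Then m(f) = 0, i.e., f is (up to sign) a product of cyclotomic polynomials times a power of z. -/
open Polynomial

lemma aux_prod_le_one (s : Multiset ℝ) (h : ∀ x ∈ s, 0 ≤ x ∧ x ≤ 1) :
    0 ≤ s.prod ∧ s.prod ≤ 1 := by
  induction s using Multiset.induction with
  | empty => simp
  | cons a s ih =>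
    obtain ⟨ha0, ha1⟩ := h a (Multiset.mem_cons_self a s)
    obtain ⟨h0, h1⟩ := ih fun x hx => h x (Multiset.mem_cons_of_mem hx)
    rw [Multiset.prod_cons]
    constructor
    · positivity
    · calc a * s.prod ≤ 1 * 1 := mul_le_mul ha1 h1 h0 zero_le_one
        _ = 1 := one_mul 1

lemma aux_norm_prod (s : Multiset ℂ) : ‖s.prod‖ = (s.map fun a => ‖a‖).prod := by
  induction s using Multiset.induction with
  | empty => simp
  | cons a s ih => simp [Multiset.prod_cons, norm_mul, ih]


/-- Kronecker's theorem: an irreducible integer polynomial of degree `≥ 2` whose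
complex roots all lie in the closed unit disk and whose leading coefficient has
absolute value `1` has logarithmic Mahler measure `0`
(`|f_r| * ∏ max(1,|λ_i|) = 1`), and all its (nonzero) roots are roots of unity. -/
theorem stmt1 (f : Polynomial ℤ) (hirr : Irreducible f) (hdeg : 2 ≤ f.natDegree)
    (hroots : ∀ lam ∈ (f.map (Int.castRingHom ℂ)).roots, ‖lam‖ ≤ 1)
    (hlead : |f.leadingCoeff| = 1) :
    (|f.leadingCoeff| : ℝ) *
      (((f.map (Int.castRingHom ℂ)).roots).map fun lam => max 1 ‖lam‖).prod = 1 ∧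
    ∀ lam ∈ (f.map (Int.castRingHom ℂ)).roots, lam ≠ 0 → ∃ n : ℕ, 0 < n ∧ lam ^ n = 1 := by
  set p := f.map (Int.castRingHom ℂ) with hp
  have hf0 : f ≠ 0 := hirr.ne_zero
  have hp0 : p ≠ 0 := Polynomial.map_ne_zero_iff (by exact_mod_cast Int.cast_injective) |>.mpr hf0
  -- constant coefficient nonzero
  have hc0 : f.coeff 0 ≠ 0 := by
    intro h
    obtain ⟨g, hg⟩ := (Polynomial.X_dvd_iff).2 h
    rcases hirr.isUnit_or_isUnit hg with hu | hu
    · exact Polynomial.not_isUnit_X hu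
    · have : f.natDegree = 1 := by
        rw [hg, Polynomial.natDegree_mul Polynomial.X_ne_zero (fun h0 => by simp [h0] at hg; exact hf0 hg)]
        rw [Polynomial.natDegree_X, Polynomial.natDegree_eq_zero_of_isUnit hu]
      omega
  -- splits
  have hsplit : p.Splits := IsAlgClosed.splits _
  have hfact : p = Polynomial.C p.leadingCoeff * (p.roots.map fun a => X - C a).prod :=
    hsplit.eq_prod_roots
  -- evaluate at 0
  have heval : p.coeff 0 = p.leadingCoeff * (p.roots.map fun a => -a).prod := by
    have := congrArg (Polynomial.eval 0) hfact
    simpa [Polynomial.coeff_zero_eq_eval_zero, Polynomial.eval_multiset_prod,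
      Multiset.map_map, Function.comp] using this
  have hleadC : ‖p.leadingCoeff‖ = 1 := by
    rw [hp, Polynomial.leadingCoeff_map_of_leadingCoeff_ne_zero]
    · show ‖((f.leadingCoeff : ℤ) : ℂ)‖ = 1
      rw [Complex.norm_intCast]
      exact_mod_cast congrArg (Int.cast : ℤ → ℝ) hlead
    · show ((f.leadingCoeff : ℤ) : ℂ) ≠ 0
      exact_mod_cast Polynomial.leadingCoeff_ne_zero.mpr hf0
  have hprod1 : (1:ℝ) ≤ (p.roots.map fun a => ‖a‖).prod := by
    have h1 : (1:ℝ) ≤ ‖p.coeff 0‖ := by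
      rw [hp, Polynomial.coeff_map]
      show (1:ℝ) ≤ ‖((f.coeff 0 : ℤ) : ℂ)‖
      rw [Complex.norm_intCast]
      exact_mod_cast Int.one_le_abs hc0
    calc (1:ℝ) ≤ ‖p.coeff 0‖ := h1
      _ = ‖p.leadingCoeff‖ * ‖(p.roots.map fun a => -a).prod‖ := by rw [heval, norm_mul]
      _ = (p.roots.map fun a => ‖a‖).prod := by
          rw [hleadC, one_mul, aux_norm_prod]
          simp [Multiset.map_map, Function.comp]
  -- each root has norm 1
  have hnorm1 : ∀ lam ∈ p.roots, ‖lam‖ = 1 := by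
    intro lam hlam
    refine le_antisymm (hroots lam hlam) ?_
    have herase : (p.roots.map fun a => ‖a‖).prod
        = ‖lam‖ * ((p.roots.erase lam).map fun a => ‖a‖).prod := by
      rw [← Multiset.prod_cons, ← Multiset.map_cons, Multiset.cons_erase hlam]
    have hrest := aux_prod_le_one ((p.roots.erase lam).map fun a => ‖a‖) (by
      intro x hx
      obtain ⟨a, ha, rfl⟩ := Multiset.mem_map.1 hx
      exact ⟨norm_nonneg a, hroots a (Multiset.mem_of_mem_erase ha)⟩)
    nlinarith [hprod1, herase, norm_nonneg lam, hrest.1, hrest.2]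
  constructor
  · have : ((p.roots).map fun lam => max 1 ‖lam‖).prod = 1 := by
      apply Multiset.prod_eq_one
      intro x hx
      obtain ⟨a, ha, rfl⟩ := Multiset.mem_map.1 hx
      rw [hnorm1 a ha]; simp
    rw [this, mul_one]
    exact_mod_cast congrArg (Int.cast : ℤ → ℝ) hlead
  · intro lam hlam _
    have hlamroot : p.eval lam = 0 := (Polynomial.mem_roots hp0).1 hlam
    set F := f.map (Int.castRingHom ℚ) with hF
    have hF0 : F ≠ 0 := Polynomial.map_ne_zero_iff (by exact_mod_cast Int.cast_injective) |>.mpr hf0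
    have hring : (algebraMap ℚ ℂ).comp (Int.castRingHom ℚ) = Int.castRingHom ℂ := by
      ext1
      simp
    have hpF : p = F.map (algebraMap ℚ ℂ) := by
      rw [hF, Polynomial.map_map, hring, hp]
    have hFa : Polynomial.aeval lam F = 0 := by
      rw [Polynomial.aeval_def, ← Polynomial.eval_map, ← hpF]
      exact hlamroot
    have halg : IsIntegral ℚ lam := isAlgebraic_iff_isIntegral.1 ⟨F, hF0, hFa⟩
    have hint : IsIntegral ℤ lam := by
      refine ⟨f * Polynomial.C f.leadingCoeff, ?_, ?_⟩
      · show (f * Polynomial.C f.leadingCoeff).leadingCoeff = 1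
        rw [Polynomial.leadingCoeff_mul, Polynomial.leadingCoeff_C]
        rw [← abs_mul_abs_self, hlead]; ring
      · have : algebraMap ℤ ℂ = Int.castRingHom ℂ := algebraMap_int_eq ℂ
        rw [Polynomial.eval₂_mul, Polynomial.eval₂_C, this, ← Polynomial.eval_map, ← hp,
          hlamroot, zero_mul]
    set K := IntermediateField.adjoin ℚ ({lam} : Set ℂ) with hK
    haveI : FiniteDimensional ℚ K := IntermediateField.adjoin.finiteDimensional halg
    haveI : NumberField K := ⟨⟩
    set x : K := IntermediateField.AdjoinSimple.gen ℚ lam with hx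
    have hmap : algebraMap K ℂ x = lam := IntermediateField.AdjoinSimple.algebraMap_gen ℚ lam
    have hxint : IsIntegral ℤ x := by
      refine (isIntegral_algebraMap_iff (algebraMap K ℂ).injective).mp ?_
      rwa [hmap]
    have hφ : ∀ φ : K →+* ℂ, ‖φ x‖ = 1 := by
      intro φ
      have hmem : φ x ∈ (minpoly ℚ x).rootSet ℂ := by
        rw [← NumberField.Embeddings.range_eval_eq_rootSet_minpoly K ℂ x]
        exact ⟨φ, rfl⟩
      have haevalx : Polynomial.aeval x F = 0 := by
        apply (algebraMap K ℂ).injective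
        rw [map_zero, ← Polynomial.aeval_algebraMap_apply, hmap]
        exact hFa
      obtain ⟨g, hg⟩ := minpoly.dvd ℚ x haevalx
      have hroot : Polynomial.aeval (φ x) (minpoly ℚ x) = 0 :=
        (Polynomial.mem_rootSet.1 hmem).2
      have hFroot : Polynomial.aeval (φ x) F = 0 := by
        rw [hg, map_mul, hroot, zero_mul]
      have : p.eval (φ x) = 0 := by
        rw [hpF, Polynomial.eval_map, ← Polynomial.aeval_def]
        exact hFroot
      exact hnorm1 (φ x) ((Polynomial.mem_roots hp0).2 this)
    obtain ⟨n, hn, hxn⟩ := NumberField.Embeddings.pow_eq_one_of_norm_eq_one K ℂ hxint hφ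
    refine ⟨n, hn, ?_⟩
    have := congrArg (algebraMap K ℂ) hxn
    rwa [map_pow, hmap, map_one] at this
end

section
/- Let f ∈ ℤ[z] be a polynomial having a complex root ζ with R := |ζ| > 1. Then there exists M ∈ ℕ such that for all m ≥ M, for every D ≥ 0 and every choice of coefficients ε_0, ..., ε_D ∈ {−2,−1,0,1,2} not all zero, the polynomial P(z) = Σ_{j=0}^D ε_j z^{mj} is not divisible by f in ℚ[z]. -/
open Polynomial

lemma key_sum_ne (w : ℂ) (hw : 3 ≤ ‖w‖) (D : ℕ) (ε : ℕ → ℤ)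
    (hb : ∀ j, ε j ∈ Set.Icc (-2 : ℤ) 2) (hnz : ∃ j ≤ D, ε j ≠ 0) :
    (∑ j ∈ Finset.range (D + 1), (ε j : ℂ) * w ^ j) ≠ 0 := by
  obtain ⟨j0, hj0D, hj0⟩ := hnz
  set S := (Finset.range (D + 1)).filter (fun j => ε j ≠ 0) with hS
  have hSne : S.Nonempty := ⟨j0, by simp [hS, Nat.lt_succ_iff, hj0D, hj0]⟩
  set k := S.max' hSne with hk
  have hkmem : k ∈ S := S.max'_mem hSne
  have hkD : k + 1 ≤ D + 1 :=
    Nat.succ_le_of_lt (Finset.mem_range.1 (Finset.mem_filter.1 hkmem).1)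
  have hεk : ε k ≠ 0 := (Finset.mem_filter.1 hkmem).2
  have hzero : ∀ j ∈ Finset.range (D + 1), j ∉ Finset.range (k + 1) →
      (ε j : ℂ) * w ^ j = 0 := by
    intro j hj hj'
    have hε0 : ε j = 0 := by
      by_contra h
      have hjS : j ∈ S := Finset.mem_filter.2 ⟨hj, h⟩
      exact hj' (Finset.mem_range.2 (Nat.lt_succ_of_le (S.le_max' j hjS)))
    simp [hε0]
  intro hsum
  have hsum' : (∑ j ∈ Finset.range (k + 1), (ε j : ℂ) * w ^ j) = 0 := by
    rw [Finset.sum_subset (Finset.range_subset_range.2 hkD) hzero]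
    exact hsum
  rw [Finset.sum_range_succ] at hsum'
  have heq : (ε k : ℂ) * w ^ k = -∑ j ∈ Finset.range k, (ε j : ℂ) * w ^ j := by
    linear_combination hsum'
  set r := ‖w‖ with hr
  have hr1 : (1 : ℝ) < r := lt_of_lt_of_le (by norm_num) hw
  have hlhs : r ^ k ≤ ‖(ε k : ℂ) * w ^ k‖ := by
    rw [norm_mul, norm_pow]
    have h1 : (1 : ℝ) ≤ ‖(ε k : ℂ)‖ := by
      rw [Complex.norm_intCast]
      exact_mod_cast Int.one_le_abs hεk
    nlinarith [pow_pos (lt_trans zero_lt_one hr1) k]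
  have hrhs : ‖∑ j ∈ Finset.range k, (ε j : ℂ) * w ^ j‖ ≤
      ∑ j ∈ Finset.range k, 2 * r ^ j := by
    refine le_trans (norm_sum_le _ _) (Finset.sum_le_sum ?_)
    intro j _
    rw [norm_mul, norm_pow]
    have hbj := hb j
    simp only [Set.mem_Icc] at hbj
    have h2 : ‖(ε j : ℂ)‖ ≤ 2 := by
      rw [Complex.norm_intCast]
      exact_mod_cast abs_le.2 hbj
    have hrp : (0 : ℝ) ≤ r ^ j := pow_nonneg (by linarith) j
    nlinarith
  have hgeom : ∑ j ∈ Finset.range k, r ^ j = (r ^ k - 1) / (r - 1) :=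
    geom_sum_eq (ne_of_gt hr1) k
  have hnorm : ‖(ε k : ℂ) * w ^ k‖ = ‖∑ j ∈ Finset.range k, (ε j : ℂ) * w ^ j‖ := by
    rw [heq, norm_neg]
  have h4 : r ^ k ≤ 2 * ((r ^ k - 1) / (r - 1)) := by
    have := hlhs.trans (hnorm.le.trans hrhs)
    rwa [← Finset.mul_sum, hgeom] at this
  have hd : (0 : ℝ) < r - 1 := by linarith
  have h5 : r ^ k * (r - 1) ≤ 2 * (r ^ k - 1) := by
    rw [← mul_div_assoc, le_div_iff₀ hd] at h4
    exact h4
  have hrk1 : (1 : ℝ) ≤ r ^ k := one_le_pow₀ hr1.le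
  nlinarith

/-- If `f ∈ ℤ[z]` has a complex root `ζ` with `|ζ| > 1`, then for all sufficiently
large `m`, no nonzero polynomial `P(z) = Σ_{j=0}^D ε_j z^{mj}` with
`ε_j ∈ {−2,−1,0,1,2}` is divisible by `f` in `ℚ[z]`. -/
theorem stmt4 (f : Polynomial ℤ) (ζ : ℂ)
    (hζ : (f.map (Int.castRingHom ℂ)).IsRoot ζ) (hR : 1 < ‖ζ‖) :
    ∃ M : ℕ, ∀ m ≥ M, ∀ D : ℕ, ∀ ε : ℕ → ℤ,
      (∀ j, ε j ∈ Set.Icc (-2 : ℤ) 2) → (∃ j ≤ D, ε j ≠ 0) →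
      ¬ (f.map (Int.castRingHom ℚ)) ∣
          (∑ j ∈ Finset.range (D + 1), C ((ε j : ℚ)) * X ^ (m * j)) := by
  obtain ⟨M, hM⟩ := pow_unbounded_of_one_lt (3 : ℝ) hR
  refine ⟨M, fun m hm D ε hb hnz hdvd => ?_⟩
  -- map divisibility to ℂ
  have φcomp : (algebraMap ℚ ℂ).comp (Int.castRingHom ℚ) = Int.castRingHom ℂ :=
    Subsingleton.elim _ _
  have hdvdC : (f.map (Int.castRingHom ℂ)) ∣
      ((∑ j ∈ Finset.range (D + 1), C ((ε j : ℚ)) * X ^ (m * j)).map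
        (algebraMap ℚ ℂ)) := by
    rw [← φcomp, ← Polynomial.map_map]
    exact Polynomial.map_dvd _ hdvd
  have hPmap : ((∑ j ∈ Finset.range (D + 1), C ((ε j : ℚ)) * X ^ (m * j)).map
      (algebraMap ℚ ℂ)) = ∑ j ∈ Finset.range (D + 1), C ((ε j : ℂ)) * X ^ (m * j) := by
    rw [Polynomial.map_sum]
    refine Finset.sum_congr rfl fun j _ => ?_
    rw [Polynomial.map_mul, Polynomial.map_pow, Polynomial.map_C, Polynomial.map_X]
    norm_num
  rw [hPmap] at hdvdC
  -- evaluate at ζ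
  have heval : (∑ j ∈ Finset.range (D + 1), (ε j : ℂ) * (ζ ^ m) ^ j) = 0 := by
    obtain ⟨g, hg⟩ := hdvdC
    have := congrArg (Polynomial.eval ζ) hg
    rw [Polynomial.eval_mul, hζ, zero_mul] at this
    rw [Polynomial.eval_finset_sum] at this
    simp only [Polynomial.eval_mul, Polynomial.eval_C, Polynomial.eval_pow,
      Polynomial.eval_X] at this
    calc (∑ j ∈ Finset.range (D + 1), (ε j : ℂ) * (ζ ^ m) ^ j)
        = ∑ j ∈ Finset.range (D + 1), (ε j : ℂ) * ζ ^ (m * j) := by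
          refine Finset.sum_congr rfl fun j _ => ?_
          rw [pow_mul]
      _ = 0 := this
  have hw : 3 ≤ ‖ζ ^ m‖ := by
    rw [norm_pow]
    calc (3 : ℝ) ≤ ‖ζ‖ ^ M := hM.le
      _ ≤ ‖ζ‖ ^ m := pow_le_pow_right₀ hR.le hm
  exact key_sum_ne (ζ ^ m) hw D ε hb hnz heval
end

section
/- Let f ∈ ℤ[z] have a complex root ζ with R := |ζ| > 1. Then there exists M ∈ ℕ such that for all m ≥ M, all 1 ≤ k < m, all D ≥ 0, and all tuples ε, δ ∈ {−1,0,1}^{D+1} not all zero, the polynomial Q(z) = Σ_{j=0}^D ε_j z^{mj} − Σ_{j=0}^D δ_j z^{mj+k} is not divisible by f in ℂ[z]. -/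
open Polynomial

set_option maxHeartbeats 1000000 in
/-- If `f ∈ ℤ[z]` has a complex root `ζ` with `|ζ| > 1`, then for all sufficiently
large `m`, all `1 ≤ k < m`, and all tuples `ε, δ ∈ {−1,0,1}^{D+1}` not all zero,
the polynomial `Q(z) = Σ_{j=0}^D ε_j z^{mj} − Σ_{j=0}^D δ_j z^{mj+k}` is not
divisible by `f` in `ℂ[z]`. -/
theorem stmt7 (f : Polynomial ℤ) (ζ : ℂ)
    (hζ : (f.map (Int.castRingHom ℂ)).IsRoot ζ) (hR : 1 < ‖ζ‖) :
    ∃ M : ℕ, ∀ m ≥ M, ∀ k, 1 ≤ k → k < m → ∀ D : ℕ, ∀ ε δ : ℕ → ℤ,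
      (∀ j, ε j ∈ Set.Icc (-1 : ℤ) 1) → (∀ j, δ j ∈ Set.Icc (-1 : ℤ) 1) →
      (∃ j ≤ D, ε j ≠ 0 ∨ δ j ≠ 0) →
      ¬ (f.map (Int.castRingHom ℂ)) ∣
          (∑ j ∈ Finset.range (D + 1), C ((ε j : ℂ)) * X ^ (m * j)
            - ∑ j ∈ Finset.range (D + 1), C ((δ j : ℂ)) * X ^ (m * j + k)) := by
  classical
  set R : ℝ := ‖ζ‖ with hRdef
  have hR0 : (0:ℝ) < R := lt_trans one_pos hR
  have htend := tendsto_pow_atTop_atTop_of_one_lt hR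
  obtain ⟨M, hM⟩ := Filter.eventually_atTop.mp
    (htend.eventually_gt_atTop (2 * R / (R - 1)))
  refine ⟨M, fun m hm k hk1 hkm D ε δ hε hδ hex hdvd => ?_⟩
  -- Key numeric facts about S := R ^ m
  set S : ℝ := R ^ m with hSdef
  have hSbig : 2 * R / (R - 1) < S := hM m hm
  have hR1 : (0:ℝ) < R - 1 := by linarith
  have hSR : 2 * R < S * (R - 1) := by
    rw [div_lt_iff₀ hR1] at hSbig; linarith
  have hS2 : (2:ℝ) < S := by nlinarith
  -- The root kills the polynomial
  have h0 := eval_eq_zero_of_dvd_of_eval_eq_zero hdvd hζ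
  simp only [eval_sub, eval_finset_sum, eval_mul, eval_C, eval_pow, eval_X] at h0
  -- Truncate the sums at the greatest nonzero index J
  set P : ℕ → Prop := fun j => ε j ≠ 0 ∨ δ j ≠ 0 with hPdef
  obtain ⟨j₀, hj₀D, hj₀⟩ := hex
  set J : ℕ := Nat.findGreatest P D with hJdef
  have hPJ : P J := Nat.findGreatest_spec hj₀D hj₀
  have hJD : J ≤ D := Nat.findGreatest_le D
  have hzero : ∀ j, J < j → j ≤ D → ε j = 0 ∧ δ j = 0 := by
    intro j h1 h2
    have h := Nat.findGreatest_is_greatest (P := P) h1 h2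
    constructor
    · by_contra hc; exact h (Or.inl hc)
    · by_contra hc; exact h (Or.inr hc)
  have hsub : Finset.range (J + 1) ⊆ Finset.range (D + 1) :=
    Finset.range_subset_range.2 (by omega)
  have htε : ∑ j ∈ Finset.range (D + 1), (ε j : ℂ) * ζ ^ (m * j)
      = ∑ j ∈ Finset.range (J + 1), (ε j : ℂ) * ζ ^ (m * j) := by
    refine (Finset.sum_subset hsub ?_).symm
    intro j hj hnj
    simp only [Finset.mem_range] at hj hnj
    have := (hzero j (by omega) (by omega)).1
    simp [this]
  have htδ : ∑ j ∈ Finset.range (D + 1), (δ j : ℂ) * ζ ^ (m * j + k)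
      = ∑ j ∈ Finset.range (J + 1), (δ j : ℂ) * ζ ^ (m * j + k) := by
    refine (Finset.sum_subset hsub ?_).symm
    intro j hj hnj
    simp only [Finset.mem_range] at hj hnj
    have := (hzero j (by omega) (by omega)).2
    simp [this]
  rw [htε, htδ, sub_eq_zero] at h0
  -- A = ζ^k * B
  set A : ℂ := ∑ j ∈ Finset.range (J + 1), (ε j : ℂ) * ζ ^ (m * j) with hAdef
  set B : ℂ := ∑ j ∈ Finset.range (J + 1), (δ j : ℂ) * ζ ^ (m * j) with hBdef
  have hAB : A = B * ζ ^ k := by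
    rw [h0, hBdef, Finset.sum_mul]
    exact Finset.sum_congr rfl fun j _ => by rw [pow_add, mul_assoc]
  have hnormAB : ‖A‖ = ‖B‖ * R ^ k := by
    rw [hAB, norm_mul, norm_pow]
  -- Norm bounds
  have hterm : ∀ (c : ℕ → ℤ) (j : ℕ), ‖(c j : ℂ) * ζ ^ (m * j)‖
      = |(c j : ℝ)| * S ^ j := by
    intro c j
    rw [norm_mul, norm_pow, Complex.norm_intCast, hSdef, ← pow_mul]
  have habs1 : ∀ (c : ℕ → ℤ), (∀ j, c j ∈ Set.Icc (-1:ℤ) 1) →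
      ∀ j, |(c j : ℝ)| ≤ 1 := by
    intro c hc j
    obtain ⟨h1, h2⟩ := hc j
    rw [abs_le]; constructor <;> [exact_mod_cast h1; exact_mod_cast h2]
  have hub : ∀ (c : ℕ → ℤ), (∀ j, c j ∈ Set.Icc (-1:ℤ) 1) → ∀ n,
      ‖∑ j ∈ Finset.range n, (c j : ℂ) * ζ ^ (m * j)‖
        ≤ ∑ j ∈ Finset.range n, S ^ j := by
    intro c hc n
    refine (norm_sum_le _ _).trans (Finset.sum_le_sum fun j _ => ?_)
    rw [hterm c j]
    have hS0 : (0:ℝ) ≤ S ^ j := by positivity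
    nlinarith [habs1 c hc j, abs_nonneg ((c j : ℝ))]
  set T : ℝ := ∑ j ∈ Finset.range J, S ^ j with hTdef
  have hT0 : 0 ≤ T := Finset.sum_nonneg fun j _ => by positivity
  set u : ℝ := S ^ J with hudef
  have hu1 : (1:ℝ) ≤ u := one_le_pow₀ (by linarith : (1:ℝ) ≤ S)
  have hTgeom : T * (S - 1) = u - 1 := geom_sum_mul S J
  have hsumsucc : ∑ j ∈ Finset.range (J + 1), S ^ j = T + u := by
    rw [Finset.sum_range_succ]
  have hlb : ∀ (c : ℕ → ℤ), (∀ j, c j ∈ Set.Icc (-1:ℤ) 1) → c J ≠ 0 →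
      u - T ≤ ‖∑ j ∈ Finset.range (J + 1), (c j : ℂ) * ζ ^ (m * j)‖ := by
    intro c hc hcJ
    rw [Finset.sum_range_succ]
    have h1 : ‖(c J : ℂ) * ζ ^ (m * J)‖
        ≤ ‖∑ j ∈ Finset.range J, (c j : ℂ) * ζ ^ (m * j)
            + (c J : ℂ) * ζ ^ (m * J)‖
          + ‖∑ j ∈ Finset.range J, (c j : ℂ) * ζ ^ (m * j)‖ := by
      have := norm_sub_le (∑ j ∈ Finset.range J, (c j : ℂ) * ζ ^ (m * j)
            + (c J : ℂ) * ζ ^ (m * J))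
          (∑ j ∈ Finset.range J, (c j : ℂ) * ζ ^ (m * j))
      simpa using this
    have h2 : u ≤ ‖(c J : ℂ) * ζ ^ (m * J)‖ := by
      rw [hterm c J]
      have : (1:ℝ) ≤ |(c J : ℝ)| := by
        have := Int.one_le_abs hcJ
        calc (1:ℝ) ≤ ((|c J| : ℤ) : ℝ) := by exact_mod_cast this
        _ = |(c J : ℝ)| := by push_cast; ring
      nlinarith [pow_pos (lt_trans one_pos (by linarith : (1:ℝ) < S) : (0:ℝ) < S) J]
    have h3 := hub c hc J
    linarith
  have hposu : (0:ℝ) < u := by linarith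
  by_cases hδJ : δ J = 0
  · -- top ε coefficient is nonzero; B is small
    have hεJ : ε J ≠ 0 := by rcases hPJ with h | h; exact h; exact absurd hδJ h
    have hAl : u - T ≤ ‖A‖ := hlb ε hε hεJ
    have hBu : ‖B‖ ≤ T := by
      have hz : ((δ J : ℂ)) * ζ ^ (m * J) = 0 := by rw [hδJ]; simp
      rw [hBdef, Finset.sum_range_succ, hz, add_zero]
      exact hub δ hδ J
    clear_value S T u A B
    clear_value R
    have hk' : R ^ k ≤ R ^ (m - 1) := pow_le_pow_right₀ (le_of_lt hR) (by omega)
    have hRm : R ^ (m - 1) * R = S := by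
      rw [hSdef, ← pow_succ]; congr 1; omega
    have hBn : (0:ℝ) ≤ ‖B‖ := norm_nonneg _
    have hchain : (u - T) * R ≤ S * T := by
      have h1 : u - T ≤ ‖B‖ * R ^ k := by rw [← hnormAB]; exact hAl
      have h2 : ‖B‖ * R ^ k ≤ T * R ^ (m - 1) := by
        apply mul_le_mul hBu hk' (by positivity) hT0
      have h3 : T * R ^ (m - 1) * R = S * T := by rw [mul_assoc, hRm]; ring
      nlinarith [pow_pos hR0 k, pow_pos hR0 (m-1)]
    have key : R * (u * (S - 1) - (u - 1)) ≤ S * (u - 1) := by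
      calc R * (u * (S - 1) - (u - 1)) = ((u - T) * R) * (S - 1) := by
            linear_combination R * hTgeom
        _ ≤ (S * T) * (S - 1) :=
            mul_le_mul_of_nonneg_right hchain (by linarith)
        _ = S * (u - 1) := by linear_combination S * hTgeom
    nlinarith [mul_pos hposu (show (0:ℝ) < S * (R - 1) - 2 * R by linarith), key]
  · -- top δ coefficient is nonzero
    have hBl : u - T ≤ ‖B‖ := hlb δ hδ hδJ
    have hAu : ‖A‖ ≤ T + u := by rw [← hsumsucc]; exact hub ε hε (J + 1)
    clear_value S T u A B
    clear_value R
    have hk' : R ≤ R ^ k := le_self_pow₀ (le_of_lt hR) (by omega)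
    have huT : 0 ≤ u - T := by nlinarith
    have hchain : R * (u - T) ≤ T + u := by
      have h1 : ‖B‖ * R ^ k ≤ T + u := by rw [← hnormAB]; exact hAu
      have h2 : (u - T) * R ≤ ‖B‖ * R ^ k := by
        apply mul_le_mul hBl hk' (by linarith) (norm_nonneg _)
      linarith [h2.trans h1]
    have key : R * (u * (S - 1) - (u - 1)) ≤ (u - 1) + u * (S - 1) := by
      calc R * (u * (S - 1) - (u - 1)) = (R * (u - T)) * (S - 1) := by
            linear_combination R * hTgeom
        _ ≤ (T + u) * (S - 1) :=
            mul_le_mul_of_nonneg_right hchain (by linarith)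
        _ = (u - 1) + u * (S - 1) := by linear_combination hTgeom
    nlinarith [mul_pos hposu (show (0:ℝ) < S * (R - 1) - 2 * R by linarith), key]
end
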